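/- For every nonempty finite digraph D, the DAG-depth ddp(D) equals the minimum of depth(P) taken over all valid DAG-depth decompositions (P, org) of D. -/

import Mathlib

open scoped Classical

noncomputable section

/-- A finite directed graph: a finite vertex set together with an adjacency
relation whose edges join vertices of the graph. -/
structure FinDigraph (α : Type) where
  verts : Finset α
  Adj : α → α → Prop
  adj_mem : ∀ u v, Adj u v → u ∈ verts ∧ v ∈ verts

namespace FinDigraph

variable {α β : Type}

/-- The out-neighbourhood `N⁺_D(v)`. -/
def outNbhd (D : FinDigraph α) (v : α) : Set α := {u | D.Adj v u}

/-- The set of vertices reachable from `s` by a (possibly trivial) directed path. -/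
def reachSet (D : FinDigraph α) (s : α) : Finset α :=
  D.verts.filter fun v => Relation.ReflTransGen D.Adj s v

/-- A reachable fragment: an inclusion-maximal set among the reachable sets. -/
def IsFragment (D : FinDigraph α) (R : Finset α) : Prop :=
  (∃ s ∈ D.verts, R = D.reachSet s) ∧
  ∀ s ∈ D.verts, R ⊆ D.reachSet s → R = D.reachSet s

/-- The collection of all reachable fragments of `D`. -/
def fragments (D : FinDigraph α) : Finset (Finset α) :=
  D.verts.powerset.filter fun R => D.IsFragment R

/-- The induced subdigraph `D[S]`. -/
def induce (D : FinDigraph α) (S : Finset α) : FinDigraph α where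
  verts := D.verts ∩ S
  Adj u v := D.Adj u v ∧ u ∈ S ∧ v ∈ S
  adj_mem := fun u v h => ⟨Finset.mem_inter.mpr ⟨(D.adj_mem u v h.1).1, h.2.1⟩,
    Finset.mem_inter.mpr ⟨(D.adj_mem u v h.1).2, h.2.2⟩⟩

/-- Deletion of a vertex: `D − v = D[V(D) ∖ {v}]`. -/
def deleteVert (D : FinDigraph α) (v : α) : FinDigraph α :=
  D.induce (D.verts.erase v)

/-- Fuel-based helper for DAG-depth; the fuel `|V(D)|` always suffices since each
recursive call strictly decreases the number of vertices. -/
def ddpAux : ℕ → FinDigraph α → ℕ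
  | 0, _ => 0
  | n+1, D =>
    if hcard : D.verts.card ≤ 1 then 1
    else if D.fragments.card = 1 then
      1 + D.verts.inf' (Finset.card_pos.mp (by omega)) fun v => ddpAux n (D.deleteVert v)
    else
      D.fragments.sup fun R => ddpAux n (D.induce R)

/-- The DAG-depth of a digraph. -/
def ddp (D : FinDigraph α) : ℕ := ddpAux D.verts.card D

/-- A DAG: a (finite) digraph with no directed cycles. -/
def IsDag (P : FinDigraph α) : Prop := ∀ v, ¬ Relation.TransGen P.Adj v v

/-- A root of a DAG: a vertex of indegree zero. -/
def IsRoot (P : FinDigraph α) (r : α) : Prop := r ∈ P.verts ∧ ∀ u, ¬ P.Adj u r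

/-- `y` is a descendant of `x`: there is a (possibly trivial) directed path from `x` to `y`. -/
def Desc (P : FinDigraph α) (x y : α) : Prop := Relation.ReflTransGen P.Adj x y

/-- `l` is a directed path in `P` starting at a root of `P` and ending at `v`. -/
def IsRootPath (P : FinDigraph α) (l : List α) (v : α) : Prop :=
  l ≠ [] ∧ l.Chain' P.Adj ∧ (∀ x ∈ l, x ∈ P.verts) ∧
  (∃ r, l.head? = some r ∧ P.IsRoot r) ∧ l.getLast? = some v

/-- The depth of a DAG: the maximum number of vertices on a directed path. -/
def depth (P : FinDigraph α) : ℕ :=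
  sSup {n : ℕ | ∃ l : List α, l.Chain' P.Adj ∧ (∀ x ∈ l, x ∈ P.verts) ∧ l.length = n}

/-- The Neighbor cover condition for a DAG-depth decomposition `(P, org)` of `D`. -/
def NeighborCover (D : FinDigraph α) (P : FinDigraph β) (org : β → α) : Prop :=
  ∀ v' ∈ P.verts, ∀ u, D.Adj (org v') u →
    (∃ u' ∈ P.verts, org u' = u ∧ P.Desc v' u') ∨
    (∀ l, P.IsRootPath l v' → ∃ u' ∈ l, org u' = u)

/-- `(P, org)` is a valid DAG-depth decomposition of `D`: `P` is a DAG, `org` maps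
`V(P)` onto `V(D)`, and the Neighbor cover condition holds. -/
def IsValidDecomp (D : FinDigraph α) (P : FinDigraph β) (org : β → α) : Prop :=
  P.IsDag ∧ (∀ v' ∈ P.verts, org v' ∈ D.verts) ∧
  (∀ v ∈ D.verts, ∃ v' ∈ P.verts, org v' = v) ∧
  NeighborCover D P org

-- ====================== new material ======================

lemma mem_reachSet {D : FinDigraph α} {s v : α} :
    v ∈ D.reachSet s ↔ v ∈ D.verts ∧ Relation.ReflTransGen D.Adj s v := by
  simp [reachSet]

lemma mem_reachSet_self {D : FinDigraph α} {s : α} (hs : s ∈ D.verts) : s ∈ D.reachSet s :=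
  mem_reachSet.mpr ⟨hs, .refl⟩

lemma reachSet_subset (D : FinDigraph α) (s : α) : D.reachSet s ⊆ D.verts :=
  Finset.filter_subset _ _

lemma reachSet_out_closed {D : FinDigraph α} {s u w : α} (hu : u ∈ D.reachSet s)
    (h : D.Adj u w) : w ∈ D.reachSet s :=
  mem_reachSet.mpr ⟨(D.adj_mem u w h).2, (mem_reachSet.mp hu).2.tail h⟩

lemma mem_fragments {D : FinDigraph α} {R : Finset α} :
    R ∈ D.fragments ↔ R ⊆ D.verts ∧ D.IsFragment R := by
  simp [fragments]

/-- every reach set is contained in some fragment -/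
lemma exists_fragment_superset {D : FinDigraph α} {s : α} (hs : s ∈ D.verts) :
    ∃ R ∈ D.fragments, D.reachSet s ⊆ R := by
  classical
  set 𝒮 : Finset (Finset α) := (D.verts.attach.image fun t => D.reachSet t.1).filter
      (fun R => D.reachSet s ⊆ R) with h𝒮
  have hmem : D.reachSet s ∈ 𝒮 := by
    simp only [h𝒮, Finset.mem_filter, Finset.mem_image]
    exact ⟨⟨⟨s, hs⟩, Finset.mem_attach _ _, rfl⟩, subset_rfl⟩
  obtain ⟨R, hR, hmax⟩ := Finset.exists_max_image 𝒮 (fun R => R.card) ⟨_, hmem⟩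
  simp only [h𝒮, Finset.mem_filter, Finset.mem_image] at hR
  obtain ⟨⟨⟨t, ht⟩, -, rfl⟩, hsub⟩ := hR
  refine ⟨D.reachSet t, mem_fragments.mpr ⟨reachSet_subset _ _, ⟨t, ht, rfl⟩, ?_⟩, hsub⟩
  intro t' ht' hsub'
  apply Finset.eq_of_subset_of_card_le hsub'
  apply hmax
  simp only [h𝒮, Finset.mem_filter, Finset.mem_image]
  exact ⟨⟨⟨t', ht'⟩, Finset.mem_attach _ _, rfl⟩, hsub.trans hsub'⟩

lemma fragment_nonempty {D : FinDigraph α} {R : Finset α} (hR : R ∈ D.fragments) :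
    R.Nonempty := by
  obtain ⟨-, ⟨s, hs, rfl⟩, -⟩ := mem_fragments.mp hR
  exact ⟨s, mem_reachSet_self hs⟩

lemma fragments_nonempty {D : FinDigraph α} (h : D.verts.Nonempty) :
    D.fragments.Nonempty := by
  obtain ⟨s, hs⟩ := h
  obtain ⟨R, hR, -⟩ := exists_fragment_superset hs
  exact ⟨R, hR⟩

/-- if there is a unique fragment, it is the whole vertex set -/
lemma fragment_eq_verts {D : FinDigraph α} {R : Finset α} (hR : R ∈ D.fragments)
    (hone : D.fragments.card = 1) : R = D.verts := by
  obtain ⟨R₀, hR₀⟩ := Finset.card_eq_one.mp hone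
  have hRR : R = R₀ := by have := hR; rw [hR₀, Finset.mem_singleton] at this; exact this
  subst hRR
  apply Finset.Subset.antisymm (mem_fragments.mp hR).1
  intro v hv
  obtain ⟨R', hR', hsub⟩ := exists_fragment_superset hv
  have : R' = R := by rw [hR₀, Finset.mem_singleton] at hR'; exact hR'
  exact this ▸ hsub (mem_reachSet_self hv)

lemma fragment_ssubset {D : FinDigraph α} {R : Finset α} (hR : R ∈ D.fragments)
    (hne : D.fragments.card ≠ 1) : R ⊂ D.verts := by
  refine Finset.ssubset_iff_subset_ne.mpr ⟨(mem_fragments.mp hR).1, fun hEq => ?_⟩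
  apply hne
  apply Finset.card_eq_one.mpr ⟨R, ?_⟩
  apply Finset.eq_singleton_iff_unique_mem.mpr ⟨hR, ?_⟩
  intro R' hR'
  obtain ⟨hsub', -, hmax'⟩ := mem_fragments.mp hR'
  obtain ⟨hsub, ⟨s, hs, hRs⟩, hmax⟩ := mem_fragments.mp hR
  have h1 : R' ⊆ D.reachSet s := by rw [← hRs, hEq]; exact hsub'
  exact (hmax' s hs h1).trans hRs.symm

lemma verts_single_fragment {D : FinDigraph α} {s : α} (hs : s ∈ D.verts)
    (hall : D.reachSet s = D.verts) : D.fragments = {D.verts} := by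
  apply Finset.eq_singleton_iff_unique_mem.mpr
  constructor
  · refine mem_fragments.mpr ⟨subset_rfl, ⟨s, hs, hall.symm⟩, ?_⟩
    intro t ht hsub
    exact (Finset.Subset.antisymm hsub (reachSet_subset _ _)).symm ▸ rfl
  · intro R hR
    obtain ⟨hsub, ⟨t, ht, rfl⟩, hmax⟩ := mem_fragments.mp hR
    have := hmax s hs (by rw [hall]; exact hsub)
    rw [this, hall]

@[simp] lemma induce_verts (D : FinDigraph α) (S : Finset α) :
    (D.induce S).verts = D.verts ∩ S := rfl

lemma induce_verts_of_subset {D : FinDigraph α} {S : Finset α} (h : S ⊆ D.verts) :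
    (D.induce S).verts = S := by
  simp [Finset.inter_eq_right.mpr h]

lemma induce_adj {D : FinDigraph α} {S : Finset α} {u v : α} :
    (D.induce S).Adj u v ↔ D.Adj u v ∧ u ∈ S ∧ v ∈ S := Iff.rfl

lemma ext_digraph {D D' : FinDigraph α} (hv : D.verts = D'.verts)
    (ha : ∀ u v, D.Adj u v ↔ D'.Adj u v) : D = D' := by
  cases D; cases D'
  simp only [mk.injEq]
  exact ⟨hv, funext fun u => funext fun v => propext (ha u v)⟩

lemma induce_verts_self (D : FinDigraph α) : D.induce D.verts = D := by
  apply ext_digraph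
  · simp
  · intro u v
    simp only [induce_adj]
    exact ⟨fun h => h.1, fun h => ⟨h, (D.adj_mem u v h).1, (D.adj_mem u v h).2⟩⟩

lemma deleteVert_verts {D : FinDigraph α} (v : α) :
    (D.deleteVert v).verts = D.verts.erase v := by
  simp [deleteVert, Finset.inter_eq_right.mpr (Finset.erase_subset _ _)]

lemma deleteVert_card {D : FinDigraph α} {v : α} (hv : v ∈ D.verts) :
    (D.deleteVert v).verts.card = D.verts.card - 1 := by
  rw [deleteVert_verts, Finset.card_erase_of_mem hv]

/-- fuel invariance for nonempty digraphs -/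
lemma ddpAux_fuel : ∀ {n m : ℕ} (D : FinDigraph α), D.verts.Nonempty →
    D.verts.card ≤ n → D.verts.card ≤ m → ddpAux n D = ddpAux m D := by
  intro n
  induction n with
  | zero => intro m D hne hn hm; have := Finset.card_pos.mpr hne; omega
  | succ n ih =>
    intro m D hne hn hm
    have hpos := Finset.card_pos.mpr hne
    obtain ⟨m', rfl⟩ : ∃ m', m = m' + 1 := ⟨m - 1, by omega⟩
    by_cases hcard : D.verts.card ≤ 1
    · simp [ddpAux, hcard]
    · have h2 : 2 ≤ D.verts.card := by omega
      by_cases hfrag : D.fragments.card = 1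
      · simp only [ddpAux, dif_neg hcard, if_pos hfrag]
        congr 1
        apply Finset.inf'_congr _ rfl
        intro v hv
        have hcv : (D.deleteVert v).verts.card = D.verts.card - 1 := deleteVert_card hv
        have hnev : (D.deleteVert v).verts.Nonempty := by
          rw [← Finset.card_pos]; omega
        exact ih _ hnev (by omega) (by omega)
      · simp only [ddpAux, dif_neg hcard, if_neg hfrag]
        apply Finset.sup_congr rfl
        intro R hR
        have hss := fragment_ssubset hR hfrag
        have hcR : (D.induce R).verts.card < D.verts.card := by
          rw [induce_verts_of_subset hss.subset]
          exact Finset.card_lt_card hss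
        have hneR : (D.induce R).verts.Nonempty := by
          rw [induce_verts_of_subset hss.subset]; exact fragment_nonempty hR
        exact ih _ hneR (by omega) (by omega)

lemma ddpAux_eq_ddp {n : ℕ} (D : FinDigraph α) (hne : D.verts.Nonempty)
    (hn : D.verts.card ≤ n) : ddpAux n D = ddp D :=
  ddpAux_fuel D hne hn (le_refl _)

lemma ddp_card_le_one {D : FinDigraph α} (hne : D.verts.Nonempty)
    (h : D.verts.card ≤ 1) : ddp D = 1 := by
  have hpos := Finset.card_pos.mpr hne
  have h1 : D.verts.card = 1 := by omega
  rw [ddp, h1]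
  simp [ddpAux, h1]

lemma ddp_single_fragment {D : FinDigraph α} (h2 : 2 ≤ D.verts.card)
    (hfrag : D.fragments.card = 1) :
    ddp D = 1 + D.verts.inf' (Finset.card_pos.mp (by omega))
      (fun v => ddp (D.deleteVert v)) := by
  obtain ⟨c, hc⟩ : ∃ c, D.verts.card = c + 2 := ⟨D.verts.card - 2, by omega⟩
  have h0 : ddp D = ddpAux (c+2) D := congrArg (fun k => ddpAux k D) hc
  rw [h0]
  simp only [ddpAux, dif_neg (by omega : ¬ (D.verts.card ≤ 1)), if_pos hfrag]
  congr 1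
  apply Finset.inf'_congr _ rfl
  intro v hv
  have hcv : (D.deleteVert v).verts.card = D.verts.card - 1 := deleteVert_card hv
  exact ddpAux_eq_ddp (n := c+1) _ (by rw [← Finset.card_pos]; omega) (by omega)

lemma ddp_multi_fragment {D : FinDigraph α} (hne : D.verts.Nonempty)
    (hfrag : D.fragments.card ≠ 1) :
    ddp D = D.fragments.sup (fun R => ddp (D.induce R)) := by
  have hpos := Finset.card_pos.mpr hne
  have h2 : 2 ≤ D.verts.card := by
    by_contra h
    have h1 : D.verts.card = 1 := by omega
    obtain ⟨a, ha⟩ := Finset.card_eq_one.mp h1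
    apply hfrag
    have ha' : a ∈ D.verts := by rw [ha]; exact Finset.mem_singleton_self a
    apply Finset.card_eq_one.mpr ⟨D.verts, ?_⟩
    apply verts_single_fragment ha'
    apply Finset.Subset.antisymm (reachSet_subset _ _)
    rw [ha]
    intro x hx
    rw [Finset.mem_singleton] at hx
    subst hx
    exact mem_reachSet_self ha'
  obtain ⟨c, hc⟩ : ∃ c, D.verts.card = c + 2 := ⟨D.verts.card - 2, by omega⟩
  have h0 : ddp D = ddpAux (c+2) D := congrArg (fun k => ddpAux k D) hc
  rw [h0]
  simp only [ddpAux, dif_neg (by omega : ¬ (D.verts.card ≤ 1)), if_neg hfrag]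
  apply Finset.sup_congr rfl
  intro R hR
  have hss := fragment_ssubset hR hfrag
  have hcR : (D.induce R).verts.card < D.verts.card := by
    rw [induce_verts_of_subset hss.subset]
    exact Finset.card_lt_card hss
  exact ddpAux_eq_ddp (n := c+1) _ (by rw [induce_verts_of_subset hss.subset]; exact fragment_nonempty hR) (by omega)

lemma ddp_le_of_fragments {D : FinDigraph α} (hne : D.verts.Nonempty) {n : ℕ}
    (h : ∀ R ∈ D.fragments, ddp (D.induce R) ≤ n) : ddp D ≤ n := by
  by_cases hfrag : D.fragments.card = 1
  · obtain ⟨R, hR⟩ := Finset.card_eq_one.mp hfrag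
    have hmem : R ∈ D.fragments := by rw [hR]; exact Finset.mem_singleton_self R
    have hRe : R = D.verts := fragment_eq_verts hmem hfrag
    have := h R hmem
    rwa [hRe, induce_verts_self] at this
  · rw [ddp_multi_fragment hne hfrag]
    exact Finset.sup_le h

lemma ddp_le_one_add_deleteVert {D : FinDigraph α} (h2 : 2 ≤ D.verts.card)
    (hfrag : D.fragments.card = 1) {v : α} (hv : v ∈ D.verts) :
    ddp D ≤ 1 + ddp (D.deleteVert v) := by
  rw [ddp_single_fragment h2 hfrag]
  exact Nat.add_le_add_left (Finset.inf'_le _ hv) 1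

lemma reachSet_induce_self {D : FinDigraph α} {s : α} :
    (D.induce (D.reachSet s)).reachSet s = (D.induce (D.reachSet s)).verts := by
  apply Finset.Subset.antisymm (reachSet_subset _ _)
  intro u hu
  rw [induce_verts, Finset.mem_inter] at hu
  rw [mem_reachSet]
  refine ⟨by rw [induce_verts]; exact Finset.mem_inter.mpr hu, ?_⟩
  have h1 : u ∈ D.reachSet s := hu.2
  have key : ∀ w, Relation.ReflTransGen D.Adj s w → w ∈ D.reachSet s →
      Relation.ReflTransGen (D.induce (D.reachSet s)).Adj s w := by
    intro w hw
    induction hw with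
    | refl => exact fun _ => .refl
    | @tail b c hsb hbc ih =>
      intro hc
      have hb : b ∈ D.reachSet s := mem_reachSet.mpr ⟨(D.adj_mem b c hbc).1, hsb⟩
      exact (ih hb).tail ⟨hbc, hb, hc⟩
  exact key u (mem_reachSet.mp h1).2 h1


-- ================= chain infrastructure =================

lemma chain'_nodup {P : FinDigraph α} (hdag : P.IsDag) {l : List α}
    (hl : l.Chain' P.Adj) : l.Nodup := by
  haveI : IsTrans α (Relation.TransGen P.Adj) :=
    ⟨fun a b c hab hbc => hab.trans hbc⟩
  have h1 : l.Chain' (Relation.TransGen P.Adj) :=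
    hl.imp fun _ _ h => Relation.TransGen.single h
  exact (List.isChain_iff_pairwise.mp h1).imp fun hxy heq => absurd (heq ▸ hxy) (hdag _)

lemma chain'_length_le_card {P : FinDigraph α} (hdag : P.IsDag) {l : List α}
    (hl : l.Chain' P.Adj) (hm : ∀ x ∈ l, x ∈ P.verts) : l.length ≤ P.verts.card := by
  rw [← List.toFinset_card_of_nodup (chain'_nodup hdag hl)]
  exact Finset.card_le_card fun x hx => hm x (List.mem_toFinset.mp hx)

lemma depth_set_nonempty (P : FinDigraph α) :
    {n : ℕ | ∃ l : List α, l.Chain' P.Adj ∧ (∀ x ∈ l, x ∈ P.verts) ∧ l.length = n}.Nonempty :=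
  ⟨0, [], List.isChain_nil, by simp, rfl⟩

lemma depth_set_bddAbove {P : FinDigraph α} (hdag : P.IsDag) :
    BddAbove {n : ℕ | ∃ l : List α, l.Chain' P.Adj ∧ (∀ x ∈ l, x ∈ P.verts) ∧ l.length = n} := by
  refine ⟨P.verts.card, fun n hn => ?_⟩
  obtain ⟨l, h1, h2, rfl⟩ := hn
  exact chain'_length_le_card hdag h1 h2

lemma le_depth {P : FinDigraph α} (hdag : P.IsDag) {l : List α}
    (h1 : l.Chain' P.Adj) (h2 : ∀ x ∈ l, x ∈ P.verts) : l.length ≤ P.depth :=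
  le_csSup (depth_set_bddAbove hdag) ⟨l, h1, h2, rfl⟩

lemma depth_le {P : FinDigraph α} {n : ℕ}
    (h : ∀ l : List α, l.Chain' P.Adj → (∀ x ∈ l, x ∈ P.verts) → l.length ≤ n) :
    P.depth ≤ n :=
  csSup_le' (by rintro m ⟨l, h1, h2, rfl⟩; exact h l h1 h2)

/-- length of a longest directed path starting at `x` -/
def htP (P : FinDigraph α) (x : α) : ℕ :=
  sSup {n : ℕ | ∃ l : List α, l.Chain' P.Adj ∧ (∀ y ∈ l, y ∈ P.verts) ∧
    l.head? = some x ∧ l.length = n}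

lemma htP_set_bddAbove {P : FinDigraph α} (hdag : P.IsDag) (x : α) :
    BddAbove {n : ℕ | ∃ l : List α, l.Chain' P.Adj ∧ (∀ y ∈ l, y ∈ P.verts) ∧
      l.head? = some x ∧ l.length = n} := by
  refine ⟨P.verts.card, fun n hn => ?_⟩
  obtain ⟨l, h1, h2, -, rfl⟩ := hn
  exact chain'_length_le_card hdag h1 h2

lemma le_htP {P : FinDigraph α} (hdag : P.IsDag) {l : List α} {x : α}
    (h1 : l.Chain' P.Adj) (h2 : ∀ y ∈ l, y ∈ P.verts) (h3 : l.head? = some x) :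
    l.length ≤ P.htP x :=
  le_csSup (htP_set_bddAbove hdag x) ⟨l, h1, h2, h3, rfl⟩

lemma one_le_htP {P : FinDigraph α} (hdag : P.IsDag) {x : α} (hx : x ∈ P.verts) :
    1 ≤ P.htP x :=
  le_htP hdag (l := [x]) (List.isChain_singleton x) (by simpa using hx) rfl

lemma htP_le_depth {P : FinDigraph α} (hdag : P.IsDag) (x : α) :
    P.htP x ≤ P.depth := by
  apply csSup_le'
  rintro n ⟨l, h1, h2, -, rfl⟩
  exact le_depth hdag h1 h2

lemma chain_mem_verts {P : FinDigraph α} {a : α} {c : List α} (h : List.Chain P.Adj a c) :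
    ∀ x ∈ c, x ∈ P.verts := by
  induction c generalizing a with
  | nil => simp
  | cons b t ih =>
    simp only [List.Chain, List.chain_cons] at h
    intro x hx
    rcases List.mem_cons.mp hx with rfl | hx
    · exact (P.adj_mem _ _ h.1).2
    · exact ih h.2 x hx

lemma chain_desc {P : FinDigraph α} {a : α} {c : List α} (h : List.Chain P.Adj a c) :
    ∀ x ∈ a :: c, P.Desc a x := by
  induction c generalizing a with
  | nil => intro x hx; simp at hx; subst hx; exact .refl
  | cons b t ih =>
    simp only [List.Chain, List.chain_cons] at h
    intro x hx
    rcases List.mem_cons.mp hx with rfl | hx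
    · exact .refl
    · exact (Relation.ReflTransGen.single h.1).trans (ih h.2 x hx)

lemma chain'_cons_iff_chain {R : α → α → Prop} {a : α} {l : List α} :
    List.Chain' R (a :: l) ↔ List.Chain R a l := Iff.rfl

lemma exists_root_chain {P : FinDigraph α} (hdag : P.IsDag) {m : List α}
    (hm : m.Chain' P.Adj) (hmem : ∀ x ∈ m, x ∈ P.verts) (hne : m ≠ []) :
    ∃ c : List α, (c ++ m).Chain' P.Adj ∧ (∀ x ∈ c ++ m, x ∈ P.verts) ∧
      (∃ r, (c ++ m).head? = some r ∧ P.IsRoot r) := by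
  set S := {n : ℕ | ∃ c : List α, (c ++ m).Chain' P.Adj ∧ (∀ x ∈ c ++ m, x ∈ P.verts) ∧
    c.length = n} with hS
  have hSne : S.Nonempty := ⟨0, [], by simpa using ⟨hm, hmem⟩⟩
  have hSbdd : BddAbove S := by
    refine ⟨P.verts.card, ?_⟩
    rintro n ⟨c, h1, h2, rfl⟩
    have := chain'_length_le_card hdag h1 h2
    simp only [List.length_append] at this
    omega
  obtain ⟨c, h1, h2, hlen⟩ := Nat.sSup_mem hSne hSbdd
  refine ⟨c, h1, h2, ?_⟩
  have hne' : c ++ m ≠ [] := fun h => hne (List.append_eq_nil_iff.mp h).2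
  obtain ⟨r, t, hrt⟩ := List.exists_cons_of_ne_nil hne'
  have hhead : (c ++ m).head? = some r := by rw [hrt]; rfl
  refine ⟨r, hhead, h2 r (by rw [hrt]; exact List.mem_cons_self), ?_⟩
  intro u hu
  have hchain : (u :: (c ++ m)).Chain' P.Adj := by
    simp only [List.Chain', List.isChain_cons]
    exact ⟨fun y hy => by rw [hrt] at hy; simp at hy; rwa [← hy], h1⟩
  have hmem' : ∀ x ∈ u :: (c ++ m), x ∈ P.verts := by
    intro x hx
    rcases List.mem_cons.mp hx with rfl | hx
    · exact (P.adj_mem _ _ hu).1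
    · exact h2 x hx
  have : (u :: c).length ∈ S := by
    refine ⟨u :: c, by simpa using hchain, by simpa using hmem', rfl⟩
  have hle : (u :: c).length ≤ sSup S := le_csSup hSbdd this
  simp only [List.length_cons] at hle
  omega

lemma exists_rootPath {P : FinDigraph α} (hdag : P.IsDag) {v : α} (hv : v ∈ P.verts) :
    ∃ l, P.IsRootPath l v := by
  obtain ⟨c, h1, h2, r, hr, hroot⟩ := exists_root_chain hdag (m := [v])
    (List.isChain_singleton v) (by simpa using hv) (by simp)
  exact ⟨c ++ [v], by simp, h1, h2, ⟨r, hr, hroot⟩, by simp⟩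

lemma rootPath_head_desc {P : FinDigraph α} {l : List α} {v : α} (hl : P.IsRootPath l v)
    {r : α} (hr : l.head? = some r) : ∀ x ∈ l, P.Desc r x := by
  obtain ⟨hne, hchain, hmem, -, hlast⟩ := hl
  obtain ⟨a, t, rfl⟩ := List.exists_cons_of_ne_nil hne
  have : a = r := by simpa using hr
  subst this
  exact chain_desc hchain

/-- appending a path to a root path -/
lemma rootPath_append_chain {P : FinDigraph α} {l : List α} {x' : α} (hl : P.IsRootPath l x')
    {c : List α} (hc : List.Chain P.Adj x' c) (hcm : ∀ y ∈ c, y ∈ P.verts) :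
    P.IsRootPath (l ++ c) ((x' :: c).getLast (List.cons_ne_nil _ _)) := by
  obtain ⟨hne, hchain, hmem, hroot, hlast⟩ := hl
  refine ⟨by simp [hne], ?_, ?_, ?_, ?_⟩
  · have hc' : List.Chain' P.Adj c := (chain'_cons_iff_chain.mpr hc).tail
    apply List.IsChain.append hchain hc'
    intro a ha b hb
    rw [hlast] at ha
    simp only [Option.mem_def, Option.some.injEq] at ha
    subst ha
    cases c with
    | nil => simp at hb
    | cons y t =>
      simp only [List.head?_cons, Option.mem_def, Option.some.injEq] at hb
      subst hb
      exact (List.chain_cons.mp hc).1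
  · intro x hx
    rcases List.mem_append.mp hx with hx | hx
    · exact hmem x hx
    · exact hcm x hx
  · obtain ⟨r, hr, hroot⟩ := hroot
    exact ⟨r, by rwa [List.head?_append_of_ne_nil _ hne], hroot⟩
  · cases c with
    | nil => simpa using hlast
    | cons y t =>
      rw [List.getLast?_append_of_ne_nil _ (by simp : (y :: t) ≠ [])]
      rw [List.getLast?_eq_getLast (by simp)]
      simp only [Option.some.injEq]
      exact (List.getLast_cons_cons (a := x') (b := y) (l := t)).symm ▸ rfl

/-- first vertex on a path satisfying `Q` -/
lemma exists_first_on_chain {P : FinDigraph α} (Q : α → Prop) :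
    ∀ (c : List α) (x : α), List.Chain P.Adj x c →
      Q ((x :: c).getLast (List.cons_ne_nil _ _)) →
    ∃ (c₁ : List α) (z : α), List.Chain P.Adj x c₁ ∧
      (x :: c₁).getLast (List.cons_ne_nil _ _) = z ∧ Q z ∧
      (∀ y ∈ x :: c₁, y ≠ z → ¬ Q y) ∧
      P.Desc z ((x :: c).getLast (List.cons_ne_nil _ _)) ∧
      (∀ y ∈ x :: c₁, y ∈ x :: c) := by
  intro c
  induction c with
  | nil =>
    intro x hx hQ
    exact ⟨[], x, List.Chain.nil, rfl, hQ, fun y hy hne => by simp at hy; exact absurd hy hne,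
      .refl, fun y hy => hy⟩
  | cons b t ih =>
    intro x hx hQ
    simp only [List.Chain, List.chain_cons] at hx
    by_cases hQx : Q x
    · refine ⟨[], x, List.Chain.nil, rfl, hQx, fun y hy hne => by simp at hy; exact absurd hy hne,
        ?_, fun y hy => by simp at hy; simp [hy]⟩
      have := chain_desc (List.chain_cons.mpr hx) ((x :: b :: t).getLast (List.cons_ne_nil _ _))
        (List.getLast_mem _)
      exact this
    · have hQ' : Q ((b :: t).getLast (List.cons_ne_nil _ _)) := by
        rwa [List.getLast_cons_cons] at hQ
      obtain ⟨c₁, z, hch, hlast, hQz, hbefore, hdesc, hsub⟩ := ih b hx.2 hQ'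
      refine ⟨b :: c₁, z, List.chain_cons.mpr ⟨hx.1, hch⟩, ?_, hQz, ?_, ?_, ?_⟩
      · rwa [List.getLast_cons_cons]
      · intro y hy hne
        rcases List.mem_cons.mp hy with rfl | hy
        · exact hQx
        · exact hbefore y hy hne
      · rwa [List.getLast_cons_cons]
      · intro y hy
        rcases List.mem_cons.mp hy with rfl | hy
        · exact List.mem_cons_self
        · exact List.mem_cons_of_mem _ (hsub y hy)

lemma exists_htP_chain {P : FinDigraph α} (hdag : P.IsDag) {z : α} (hz : z ∈ P.verts) :
    ∃ m : List α, m.Chain' P.Adj ∧ (∀ y ∈ m, y ∈ P.verts) ∧ m.head? = some z ∧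
      m.length = P.htP z := by
  have hSne : {n : ℕ | ∃ l : List α, l.Chain' P.Adj ∧ (∀ y ∈ l, y ∈ P.verts) ∧
      l.head? = some z ∧ l.length = n}.Nonempty :=
    ⟨1, [z], List.isChain_singleton z, by simpa using hz, rfl, rfl⟩
  obtain ⟨m, h1, h2, h3, h4⟩ := Nat.sSup_mem hSne (htP_set_bddAbove hdag z)
  exact ⟨m, h1, h2, h3, h4⟩

lemma htP_add_one_le {P : FinDigraph α} (hdag : P.IsDag) {x z : α} {c : List α}
    (hc : List.Chain P.Adj x c) (hcm : ∀ y ∈ c, y ∈ P.verts) (hx : x ∈ P.verts)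
    (hne : c ≠ []) (hz : (x :: c).getLast (List.cons_ne_nil _ _) = z) :
    P.htP z + 1 ≤ P.htP x := by
  have hzv : z ∈ P.verts := by
    rcases List.mem_cons.mp (hz ▸ List.getLast_mem (List.cons_ne_nil x c)) with h | h
    · rwa [h]
    · exact hcm _ h
  obtain ⟨m, hm1, hm2, hm3, hm4⟩ := exists_htP_chain hdag hzv
  obtain ⟨z', t, rfl⟩ := List.exists_cons_of_ne_nil
    (fun h => by simp [h] at hm3 : m ≠ [])
  have hz' : z' = z := by simpa using hm3
  subst hz'
  -- combined chain : (x :: c) ++ t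
  have hchain : ((x :: c) ++ t).Chain' P.Adj := by
    apply List.IsChain.append (chain'_cons_iff_chain.mpr hc)
      (List.isChain_cons.mp hm1).2
    intro a ha b hb
    rw [List.getLast?_eq_getLast (List.cons_ne_nil x c), hz] at ha
    simp only [Option.mem_def, Option.some.injEq] at ha
    subst ha
    exact (List.isChain_cons.mp hm1).1 b hb
  have hmm : ∀ y ∈ (x :: c) ++ t, y ∈ P.verts := by
    intro y hy
    rcases List.mem_append.mp hy with hy | hy
    · rcases List.mem_cons.mp hy with rfl | hy
      · exact hx
      · exact hcm y hy
    · exact hm2 y (List.mem_cons_of_mem _ hy)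
  have hlen := le_htP hdag hchain hmm (by simp : ((x :: c) ++ t).head? = some x)
  simp only [List.length_append, List.length_cons] at hlen hm4
  have hcne : 1 ≤ c.length := by
    cases c with
    | nil => exact absurd rfl hne
    | cons a b => simp
  omega

lemma rootPath_last_mem {P : FinDigraph α} {l : List α} {v : α} (h : P.IsRootPath l v) :
    v ∈ l ∧ v ∈ P.verts := by
  obtain ⟨hne, -, hmem, -, hlast⟩ := h
  rw [List.getLast?_eq_getLast hne] at hlast
  have hv : v ∈ l := (Option.some.inj hlast) ▸ List.getLast_mem hne
  exact ⟨hv, hmem v hv⟩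

/-- every vertex reachable from `s` has a preimage that is a descendant of the
end of the root path -/
lemma reach_preimage_desc {D : FinDigraph α} {P : FinDigraph β} {org : β → α}
    (hval : IsValidDecomp D P org)
    {G : FinDigraph α} (hGa : ∀ u w, G.Adj u w → D.Adj u w)
    {ℓ : List β} {x' : β} (hℓ : P.IsRootPath ℓ x')
    (hℓorg : ∀ y ∈ ℓ, org y ∈ G.verts → y = x')
    {s : α} {s' : β} (hs' : s' ∈ P.verts) (horgs : org s' = s) (hdesc : P.Desc x' s') :
    ∀ u, Relation.ReflTransGen G.Adj s u →
      ∃ u' ∈ P.verts, org u' = u ∧ P.Desc x' u' := by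
  have hx'v : x' ∈ P.verts := (rootPath_last_mem hℓ).2
  intro u hu
  induction hu with
  | refl => exact ⟨s', hs', horgs, hdesc⟩
  | @tail b w hsb hbw ih =>
    obtain ⟨b', hb', horgb, hdescb⟩ := ih
    have hDadj : D.Adj (org b') w := horgb ▸ hGa _ _ hbw
    rcases hval.2.2.2 b' hb' w hDadj with ⟨u', hu', horgu, hdescu⟩ | hcover
    · exact ⟨u', hu', horgu, hdescb.trans hdescu⟩
    · obtain ⟨c, hc, hlastc⟩ := List.exists_isChain_cons_of_relationReflTransGen hdescb
      have hcm : ∀ y ∈ c, y ∈ P.verts := chain_mem_verts hc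
      have hrp := rootPath_append_chain hℓ hc hcm
      rw [hlastc] at hrp
      obtain ⟨w', hw', horgw⟩ := hcover _ hrp
      rcases List.mem_append.mp hw' with hw' | hw'
      · have hwG : w ∈ G.verts := (G.adj_mem _ _ hbw).2
        have hx := hℓorg w' hw' (by rwa [horgw])
        subst hx
        exact ⟨w', hx'v, horgw, .refl⟩
      · exact ⟨w', hcm w' hw', horgw, chain_desc hc w' (List.mem_cons_of_mem _ hw')⟩

/-- the main lemma for the lower bound -/
lemma claimC {D : FinDigraph α} {P : FinDigraph β} {org : β → α}
    (hval : IsValidDecomp D P org) :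
    ∀ N : ℕ, ∀ G : FinDigraph α, G.verts.card ≤ N →
      (∀ u w, G.Adj u w → G.Adj u w ∧ u ∈ G.verts ∧ w ∈ G.verts) →
      (∀ u w, G.Adj u w → D.Adj u w) →
      ∀ s : α, s ∈ G.verts → G.reachSet s = G.verts →
      ∀ (ℓ : List β) (x' : β), P.IsRootPath ℓ x' →
      (∀ y ∈ ℓ, org y ∈ G.verts → y = x') →
      (∃ s' ∈ P.verts, org s' = s ∧ P.Desc x' s') →
      ddp G ≤ P.htP x' := by
  obtain ⟨hdag, horgmem, hsurj, hcover⟩ := hval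
  intro N
  induction N with
  | zero =>
    intro G hcard _ _ s hs _ _ _ _ _ _
    have := Finset.card_pos.mpr ⟨s, hs⟩
    omega
  | succ N ih =>
    intro G hcard hadjmem hGa s hs hreach ℓ x' hℓ hℓorg hs'
    obtain ⟨s', hs'P, horgs, hdescs⟩ := hs'
    have hx'v : x' ∈ P.verts := (rootPath_last_mem hℓ).2
    have hGne : G.verts.Nonempty := ⟨s, hs⟩
    by_cases hone : G.verts.card ≤ 1
    · rw [ddp_card_le_one hGne hone]
      exact one_le_htP hdag hx'v
    · have h2 : 2 ≤ G.verts.card := by omega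
      have hfrag : G.fragments.card = 1 := by
        rw [verts_single_fragment hs hreach]; simp
      -- (*)
      have hstar : ∀ u ∈ G.verts, ∃ u' ∈ P.verts, org u' = u ∧ P.Desc x' u' := by
        intro u hu
        rw [← hreach, mem_reachSet] at hu
        exact reach_preimage_desc ⟨hdag, horgmem, hsurj, hcover⟩ hGa hℓ hℓorg
          hs'P horgs hdescs u hu.2
      -- choose v₀ : org of first vertex on the path x' ⇝ s' with live org
      obtain ⟨c, hc, hlastc⟩ := List.exists_isChain_cons_of_relationReflTransGen hdescs
      obtain ⟨c₁, x'', hch1, hlast1, hQ1, hbefore1, -, -⟩ :=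
        exists_first_on_chain (fun y => org y ∈ G.verts) c x' hc
          (by rw [hlastc]; show org s' ∈ G.verts; rw [horgs]; exact hs)
      set v₀ := org x'' with hv₀
      have hv₀G : v₀ ∈ G.verts := hQ1
      set G' := G.deleteVert v₀ with hG'
      have hG'verts : G'.verts = G.verts.erase v₀ := deleteVert_verts v₀
      have hnotQ2 : org x' ∉ G'.verts := by
        rw [hG'verts]
        intro hmem
        have hxG : org x' ∈ G.verts := Finset.mem_of_mem_erase hmem
        have hxne : org x' ≠ v₀ := Finset.ne_of_mem_erase hmem
        rcases eq_or_ne x' x'' with h | h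
        · exact hxne (h ▸ rfl)
        · exact hbefore1 x' (List.mem_cons_self) h hxG
      have hbound : ∀ R ∈ G'.fragments, ddp (G'.induce R) ≤ P.htP x' - 1 := by
        intro R hR
        obtain ⟨-, ⟨s₂, hs₂, hRs⟩, -⟩ := mem_fragments.mp hR
        set G₂ := G'.induce R with hG₂def
        have hG₂sub : G₂.verts ⊆ G'.verts := by
          rw [hG₂def, induce_verts]; exact Finset.inter_subset_left
        have hG'subG : G'.verts ⊆ G.verts := by
          rw [hG'verts]; exact Finset.erase_subset _ _
        have hs₂G₂ : s₂ ∈ G₂.verts := by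
          rw [hG₂def, induce_verts, Finset.mem_inter]
          exact ⟨hs₂, hRs ▸ mem_reachSet_self hs₂⟩
        have hreach₂ : G₂.reachSet s₂ = G₂.verts := by
          rw [hG₂def, hRs]; exact reachSet_induce_self
        -- preimage of s₂
        obtain ⟨t', ht'P, horgt, hdesct⟩ := hstar s₂ (hG'subG hs₂)
        -- path x' ⇝ t' ; first vertex with org ∈ G₂.verts
        obtain ⟨c₂, hc₂, hlastc₂⟩ := List.exists_isChain_cons_of_relationReflTransGen hdesct
        obtain ⟨c₃, z, hch3, hlast3, hQ3, hbefore3, hdesc3, -⟩ :=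
          exists_first_on_chain (fun y => org y ∈ G₂.verts) c₂ x' hc₂
            (by rw [hlastc₂]; show org t' ∈ G₂.verts; rw [horgt]; exact hs₂G₂)
        have hzne : z ≠ x' := by
          intro h
          rw [h] at hQ3
          exact hnotQ2 (hG₂sub hQ3)
        have hc₃ne : c₃ ≠ [] := by
          intro h
          subst h
          exact hzne (by simpa using hlast3.symm)
        have hc₃m : ∀ y ∈ c₃, y ∈ P.verts := chain_mem_verts hch3
        -- new root path
        have hrp₂ := rootPath_append_chain hℓ hch3 hc₃m
        rw [hlast3] at hrp₂
        -- apply IH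
        have hcard₂ : G₂.verts.card ≤ N := by
          have h1 : G₂.verts.card ≤ G'.verts.card := Finset.card_le_card hG₂sub
          have h2' : G'.verts.card = G.verts.card - 1 := by
            rw [hG'verts, Finset.card_erase_of_mem hv₀G]
          omega
        have hG₂a : ∀ u w, G₂.Adj u w → D.Adj u w := by
          intro u w h
          exact hGa u w ((h.1 : G'.Adj u w)).1
        have hadjmem₂ : ∀ u w, G₂.Adj u w → G₂.Adj u w ∧ u ∈ G₂.verts ∧ w ∈ G₂.verts :=
          fun u w h => ⟨h, (G₂.adj_mem u w h).1, (G₂.adj_mem u w h).2⟩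
        have hℓorg₂ : ∀ y ∈ ℓ ++ c₃, org y ∈ G₂.verts → y = z := by
          intro y hy horgy
          rcases List.mem_append.mp hy with hy | hy
          · exfalso
            have := hℓorg y hy (hG'subG (hG₂sub horgy))
            subst this
            exact hnotQ2 (hG₂sub horgy)
          · by_contra hne
            exact hbefore3 y (List.mem_cons_of_mem _ hy) hne horgy
        rw [hlastc₂] at hdesc3
        have hih := ih G₂ hcard₂ hadjmem₂ hG₂a s₂ hs₂G₂ hreach₂ (ℓ ++ c₃) z hrp₂
          hℓorg₂ ⟨t', ht'P, horgt, hdesc3⟩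
        -- htP z + 1 ≤ htP x'
        have hht := htP_add_one_le hdag hch3 hc₃m hx'v hc₃ne hlast3
        omega
      have hG'ne : G'.verts.Nonempty := by
        rw [← Finset.card_pos, hG'verts, Finset.card_erase_of_mem hv₀G]
        omega
      have h1le : 1 ≤ P.htP x' := one_le_htP hdag hx'v
      have hA : ddp G ≤ 1 + ddp G' := ddp_le_one_add_deleteVert h2 hfrag hv₀G
      have hB : ddp G' ≤ P.htP x' - 1 := ddp_le_of_fragments hG'ne hbound
      omega

lemma lower_bound {D : FinDigraph α} (hne : D.verts.Nonempty)
    {P : FinDigraph β} {org : β → α} (hval : IsValidDecomp D P org) :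
    ddp D ≤ depth P := by
  have hdag := hval.1
  apply ddp_le_of_fragments hne
  intro R hR
  obtain ⟨-, ⟨s, hs, hRs⟩, -⟩ := mem_fragments.mp hR
  set G := D.induce R with hGdef
  obtain ⟨s', hs'P, horgs⟩ := hval.2.2.1 s hs
  obtain ⟨l, hl⟩ := exists_rootPath hdag hs'P
  obtain ⟨r, hrhead, hroot⟩ := hl.2.2.2.1
  have hdesc : P.Desc r s' := rootPath_head_desc hl hrhead s' (rootPath_last_mem hl).1
  have hrp : P.IsRootPath [r] r :=
    ⟨by simp, List.isChain_singleton r, by simpa using hroot.1, ⟨r, rfl, hroot⟩, by simp⟩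
  have hsG : s ∈ G.verts := by
    rw [hGdef, induce_verts, Finset.mem_inter]
    exact ⟨hs, hRs ▸ mem_reachSet_self hs⟩
  have hreach : G.reachSet s = G.verts := by
    rw [hGdef, hRs]; exact reachSet_induce_self
  have hclaim := claimC hval G.verts.card G (le_refl _)
    (fun u w h => ⟨h, (G.adj_mem u w h).1, (G.adj_mem u w h).2⟩)
    (fun u w h => h.1) s hsG hreach [r] r hrp
    (by intro y hy _; simpa using hy) ⟨s', hs'P, horgs, hdesc⟩
  exact hclaim.trans (htP_le_depth hdag r)

-- ================= cone construction =================

/-- adding a new root below which everything hangs -/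
def cone (P' : FinDigraph ℕ) : FinDigraph ℕ where
  verts := insert 0 (P'.verts.image (· + 1))
  Adj a b := (a = 0 ∧ ∃ x, b = x + 1 ∧ P'.IsRoot x) ∨
             (∃ x y, a = x + 1 ∧ b = y + 1 ∧ P'.Adj x y)
  adj_mem := by
    rintro a b (⟨rfl, x, rfl, hroot⟩ | ⟨x, y, rfl, rfl, hadj⟩)
    · exact ⟨Finset.mem_insert_self _ _,
        Finset.mem_insert_of_mem (Finset.mem_image.mpr ⟨x, hroot.1, rfl⟩)⟩
    · exact ⟨Finset.mem_insert_of_mem (Finset.mem_image.mpr ⟨x, (P'.adj_mem _ _ hadj).1, rfl⟩),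
        Finset.mem_insert_of_mem (Finset.mem_image.mpr ⟨y, (P'.adj_mem _ _ hadj).2, rfl⟩)⟩

variable {P' : FinDigraph ℕ}

lemma cone_no_in_zero {a : ℕ} : ¬ (cone P').Adj a 0 := by
  rintro (⟨rfl, x, hx, -⟩ | ⟨x, y, rfl, hy, -⟩) <;> omega

lemma cone_adj_succ {x y : ℕ} : (cone P').Adj (x + 1) (y + 1) ↔ P'.Adj x y := by
  constructor
  · rintro (⟨h, -⟩ | ⟨x', y', hx, hy, hadj⟩)
    · omega
    · have hx' : x' = x := by omega
      have hy' : y' = y := by omega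
      subst hx'; subst hy'
      exact hadj
  · intro h
    exact Or.inr ⟨x, y, rfl, rfl, h⟩

lemma cone_mem_succ {x : ℕ} : x + 1 ∈ (cone P').verts ↔ x ∈ P'.verts := by
  simp only [cone, Finset.mem_insert, Finset.mem_image]
  constructor
  · rintro (h | ⟨y, hy, hxy⟩)
    · omega
    · have : y = x := by omega
      subst this; exact hy
  · intro h; exact Or.inr ⟨x, h, rfl⟩

lemma cone_no_trans_zero {a : ℕ} : ¬ Relation.TransGen (cone P').Adj a 0 := by
  intro h
  suffices H : ∀ b, Relation.TransGen (cone P').Adj a b → b ≠ 0 from H 0 h rfl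
  intro b hb
  induction hb with
  | single h => rintro rfl; exact cone_no_in_zero h
  | tail _ h _ => rintro rfl; exact cone_no_in_zero h

lemma cone_trans_succ {a b : ℕ} (h : Relation.TransGen (cone P').Adj a b) :
    ∀ x y, a = x + 1 → b = y + 1 → Relation.TransGen P'.Adj x y := by
  induction h with
  | single h =>
    rintro x y rfl rfl
    exact Relation.TransGen.single (cone_adj_succ.mp h)
  | @tail b c hab hbc ih =>
    rintro x y rfl rfl
    cases b with
    | zero => exact absurd hab cone_no_trans_zero
    | succ z => exact (ih x z rfl rfl).tail (cone_adj_succ.mp hbc)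

lemma cone_isDag (hdag : P'.IsDag) : (cone P').IsDag := by
  intro v hv
  cases v with
  | zero => exact cone_no_trans_zero hv
  | succ x => exact hdag x (cone_trans_succ hv x x rfl rfl)

lemma cone_isRoot_iff (hdag : P'.IsDag) {r : ℕ} (hr : r ∈ (cone P').verts) :
    (cone P').IsRoot r ↔ r = 0 := by
  constructor
  · intro hroot
    by_contra h
    obtain ⟨x, rfl⟩ : ∃ x, r = x + 1 := ⟨r - 1, by omega⟩
    have hx : x ∈ P'.verts := cone_mem_succ.mp hr
    by_cases hxr : P'.IsRoot x
    · exact hroot.2 0 (Or.inl ⟨rfl, x, rfl, hxr⟩)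
    · have : ∃ u, P'.Adj u x := by
        by_contra hno
        push_neg at hno
        exact hxr ⟨hx, hno⟩
      obtain ⟨u, hu⟩ := this
      exact hroot.2 (u + 1) (cone_adj_succ.mpr hu)
  · rintro rfl
    exact ⟨Finset.mem_insert_self _ _, fun u => cone_no_in_zero⟩

/-- chains in the cone starting at a successor project down -/
lemma cone_chain_succ : ∀ (t : List ℕ) (a : ℕ), List.Chain (cone P').Adj (a + 1) t →
    ∃ t', t = t'.map (· + 1) ∧ List.Chain P'.Adj a t' := by
  intro t
  induction t with
  | nil => exact fun a _ => ⟨[], rfl, List.Chain.nil⟩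
  | cons b r ih =>
    intro a h
    simp only [List.Chain, List.chain_cons] at h
    obtain ⟨y, rfl⟩ : ∃ y, b = y + 1 := by
      cases b with
      | zero => exact absurd h.1 cone_no_in_zero
      | succ y => exact ⟨y, rfl⟩
    obtain ⟨t', rfl, hch⟩ := ih y h.2
    exact ⟨y :: t', rfl, List.chain_cons.mpr ⟨cone_adj_succ.mp h.1, hch⟩⟩

/-- root paths in the cone to a successor vertex are liftings of root paths in `P'` -/
lemma cone_rootPath (hdag : P'.IsDag) {l : List ℕ} {x : ℕ}
    (hl : (cone P').IsRootPath l (x + 1)) :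
    ∃ t', P'.IsRootPath t' x ∧ l = 0 :: t'.map (· + 1) := by
  obtain ⟨hne, hchain, hmem, ⟨r, hrhead, hroot⟩, hlast⟩ := hl
  have hr0 : r = 0 := (cone_isRoot_iff hdag hroot.1).mp hroot
  subst hr0
  obtain ⟨r', t, rfl⟩ := List.exists_cons_of_ne_nil hne
  have : r' = 0 := by simpa using hrhead
  subst this
  have hchaint : List.Chain (cone P').Adj 0 t := hchain
  have htne : t ≠ [] := by
    rintro rfl
    simp at hlast
  obtain ⟨b, t₂, rfl⟩ := List.exists_cons_of_ne_nil htne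
  simp only [List.Chain, List.chain_cons] at hchaint
  obtain ⟨y₀, rfl, hrooty⟩ : ∃ y₀, b = y₀ + 1 ∧ P'.IsRoot y₀ := by
    rcases hchaint.1 with ⟨-, y₀, rfl, hy⟩ | ⟨x', y', hx', -, -⟩
    · exact ⟨y₀, rfl, hy⟩
    · omega
  obtain ⟨t', rfl, hch'⟩ := cone_chain_succ t₂ y₀ hchaint.2
  refine ⟨y₀ :: t', ⟨by simp, hch', ?_, ⟨y₀, rfl, hrooty⟩, ?_⟩, by simp⟩
  · intro z hz
    have : z + 1 ∈ (0 :: (y₀ + 1) :: t'.map (· + 1)) := by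
      rcases List.mem_cons.mp hz with rfl | hz
      · simp
      · simp only [List.mem_cons, List.mem_map]
        exact Or.inr (Or.inr ⟨z, hz, rfl⟩)
    exact cone_mem_succ.mp (hmem _ this)
  · -- getLast of the mapped list
    have h1 : ((0 : ℕ) :: (y₀ + 1) :: t'.map (· + 1)).getLast? =
        ((y₀ :: t').map (· + 1)).getLast? := by
      rw [List.getLast?_cons_cons]
      rfl
    rw [h1, List.getLast?_map, List.getLast?_eq_getLast (by simp)] at hlast
    rw [List.getLast?_eq_getLast (by simp)]
    simp only [Option.map_some, Option.some.injEq] at hlast ⊢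
    omega

lemma cone_desc_succ {x y : ℕ} (h : P'.Desc x y) : (cone P').Desc (x + 1) (y + 1) :=
  Relation.ReflTransGen.lift (· + 1) (fun _ _ hab => cone_adj_succ.mpr hab) _ _ h

lemma cone_desc_zero (hdag : P'.IsDag) {x : ℕ} (hx : x ∈ P'.verts) :
    (cone P').Desc 0 (x + 1) := by
  obtain ⟨l, hl⟩ := exists_rootPath hdag hx
  obtain ⟨r, hrh, hroot⟩ := hl.2.2.2.1
  have hdesc : P'.Desc r x := rootPath_head_desc hl hrh x (rootPath_last_mem hl).1
  have h0 : (cone P').Adj 0 (r + 1) := Or.inl ⟨rfl, r, rfl, hroot⟩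
  exact (Relation.ReflTransGen.single h0).trans (cone_desc_succ hdesc)

lemma cone_chain_length (hdag : P'.IsDag) {l : List ℕ} (hchain : l.Chain' (cone P').Adj)
    (hmem : ∀ x ∈ l, x ∈ (cone P').verts) : l.length ≤ P'.depth + 1 := by
  cases l with
  | nil => simp
  | cons a t =>
    cases a with
    | zero =>
      cases t with
      | nil => simp
      | cons b t₂ =>
        have hch : List.Chain (cone P').Adj 0 (b :: t₂) := hchain
        simp only [List.Chain, List.chain_cons] at hch
        obtain ⟨y, rfl⟩ : ∃ y, b = y + 1 := by
          rcases hch.1 with ⟨-, y, rfl, -⟩ | ⟨x', y', hx', -, -⟩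
          · exact ⟨y, rfl⟩
          · omega
        obtain ⟨t', rfl, hch'⟩ := cone_chain_succ t₂ y hch.2
        have hchy : (y :: t').Chain' P'.Adj := hch'
        have hmy : ∀ z ∈ y :: t', z ∈ P'.verts := by
          intro z hz
          apply cone_mem_succ.mp
          apply hmem
          rcases List.mem_cons.mp hz with rfl | hz
          · simp
          · simp only [List.mem_cons, List.mem_map]
            exact Or.inr (Or.inr ⟨z, hz, rfl⟩)
        have hlen := le_depth hdag hchy hmy
        simp only [List.length_cons, List.length_map] at hlen ⊢
        omega
    | succ x =>
      obtain ⟨t', rfl, hch'⟩ := cone_chain_succ t x hchain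
      have hchx : (x :: t').Chain' P'.Adj := hch'
      have hmx : ∀ z ∈ x :: t', z ∈ P'.verts := by
        intro z hz
        apply cone_mem_succ.mp
        apply hmem
        rcases List.mem_cons.mp hz with rfl | hz
        · simp
        · simp only [List.mem_cons, List.mem_map]
          exact Or.inr ⟨z, hz, rfl⟩
      have hlen := le_depth hdag hchx hmx
      simp only [List.length_cons, List.length_map] at hlen ⊢
      omega

lemma cone_depth (hdag : P'.IsDag) (hne : P'.verts.Nonempty) :
    (cone P').depth = P'.depth + 1 := by
  apply le_antisymm
  · exact depth_le (fun l h1 h2 => cone_chain_length hdag h1 h2)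
  · obtain ⟨x₀, hx₀⟩ := hne
    have hd1 : 1 ≤ P'.depth :=
      le_depth hdag (List.isChain_singleton x₀) (by simpa using hx₀)
    obtain ⟨m, hm1, hm2, hm3⟩ := Nat.sSup_mem (depth_set_nonempty P') (depth_set_bddAbove hdag)
    have hm3' : m.length = P'.depth := hm3
    have hmne : m ≠ [] := by
      intro h
      rw [h] at hm3'
      simp only [List.length_nil] at hm3'
      omega
    obtain ⟨c, hc1, hc2, r, hrh, hroot⟩ := exists_root_chain hdag hm1 hm2 hmne
    have hmap : ((c ++ m).map (· + 1)).Chain' (cone P').Adj := by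
      simp only [List.Chain', List.isChain_map]
      exact hc1.imp (fun _ _ h => cone_adj_succ.mpr h)
    have hfull : ((0 : ℕ) :: (c ++ m).map (· + 1)).Chain' (cone P').Adj := by
      simp only [List.Chain', List.isChain_cons]
      refine ⟨?_, hmap⟩
      intro y hy
      rw [List.head?_map, hrh] at hy
      simp only [Option.map_some, Option.mem_def, Option.some.injEq] at hy
      subst hy
      exact Or.inl ⟨rfl, r, rfl, hroot⟩
    have hmm : ∀ z ∈ (0 : ℕ) :: (c ++ m).map (· + 1), z ∈ (cone P').verts := by
      intro z hz
      rcases List.mem_cons.mp hz with rfl | hz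
      · exact Finset.mem_insert_self _ _
      · obtain ⟨w, hw, rfl⟩ := List.mem_map.mp hz
        exact cone_mem_succ.mpr (hc2 w hw)
    have hlen := le_depth (cone_isDag hdag) hfull hmm
    simp only [List.length_cons, List.length_map, List.length_append] at hlen
    omega

lemma cone_valid {D : FinDigraph α} {v : α} (hv : v ∈ D.verts)
    {org' : ℕ → α} (hval : IsValidDecomp (D.deleteVert v) P' org') :
    IsValidDecomp D (cone P') (fun n => if n = 0 then v else org' (n - 1)) := by
  obtain ⟨hdag, hmem', hsurj', hcover'⟩ := hval
  have hDv : (D.deleteVert v).verts = D.verts.erase v := deleteVert_verts v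
  refine ⟨cone_isDag hdag, ?_, ?_, ?_⟩
  · intro v' hv'
    cases v' with
    | zero => simpa using hv
    | succ x =>
      have hx := cone_mem_succ.mp hv'
      have := hmem' x hx
      rw [hDv] at this
      simpa using Finset.mem_of_mem_erase this
  · intro u hu
    by_cases huv : u = v
    · exact ⟨0, Finset.mem_insert_self _ _, by simp [huv]⟩
    · have : u ∈ (D.deleteVert v).verts := by
        rw [hDv]; exact Finset.mem_erase.mpr ⟨huv, hu⟩
      obtain ⟨x, hx, horg⟩ := hsurj' u this
      exact ⟨x + 1, cone_mem_succ.mpr hx, by simpa using horg⟩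
  · intro v' hv' u hadj
    cases v' with
    | zero =>
      simp only [if_pos rfl] at hadj
      by_cases huv : u = v
      · subst huv
        exact Or.inl ⟨0, Finset.mem_insert_self _ _, by simp, .refl⟩
      · have hu : u ∈ (D.deleteVert v).verts := by
          rw [hDv]; exact Finset.mem_erase.mpr ⟨huv, (D.adj_mem _ _ hadj).2⟩
        obtain ⟨x, hx, horg⟩ := hsurj' u hu
        exact Or.inl ⟨x + 1, cone_mem_succ.mpr hx, by simpa using horg,
          cone_desc_zero hdag hx⟩
    | succ x =>
      have hx : x ∈ P'.verts := cone_mem_succ.mp hv'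
      simp only [Nat.succ_ne_zero, if_neg, Nat.add_sub_cancel] at hadj
      by_cases huv : u = v
      · refine Or.inr ?_
        intro l hl
        obtain ⟨t', -, rfl⟩ := cone_rootPath hdag hl
        exact ⟨0, List.mem_cons_self, by simp [huv]⟩
      · have hox : org' x ∈ (D.deleteVert v).verts := hmem' x hx
        have hu : u ∈ (D.deleteVert v).verts := by
          rw [hDv]; exact Finset.mem_erase.mpr ⟨huv, (D.adj_mem _ _ hadj).2⟩
        have hadj' : (D.deleteVert v).Adj (org' x) u := by
          refine ⟨hadj, ?_, ?_⟩
          · rwa [hDv] at hox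
          · rwa [hDv] at hu
        rcases hcover' x hx u hadj' with ⟨u', hu', horg, hdesc⟩ | hcov
        · exact Or.inl ⟨u' + 1, cone_mem_succ.mpr hu', by simpa using horg,
            cone_desc_succ hdesc⟩
        · refine Or.inr ?_
          intro l hl
          obtain ⟨t', ht', rfl⟩ := cone_rootPath hdag hl
          obtain ⟨u', hu't, horg⟩ := hcov t' ht'
          refine ⟨u' + 1, ?_, by simpa using horg⟩
          exact List.mem_cons_of_mem _ (List.mem_map.mpr ⟨u', hu't, rfl⟩)

-- ================= disjoint union construction =================

def unionD (L : List (Finset α)) (Pf : Finset α → FinDigraph ℕ) : FinDigraph ℕ where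
  verts := (Finset.range L.length).biUnion fun i => (Pf (L.getD i ∅)).verts.image (Nat.pair i)
  Adj a b := ∃ i < L.length, ∃ x y, (Pf (L.getD i ∅)).Adj x y ∧ a = Nat.pair i x ∧ b = Nat.pair i y
  adj_mem := by
    rintro a b ⟨i, hi, x, y, hadj, rfl, rfl⟩
    constructor
    · exact Finset.mem_biUnion.mpr ⟨i, Finset.mem_range.mpr hi,
        Finset.mem_image.mpr ⟨x, ((Pf (L.getD i ∅)).adj_mem _ _ hadj).1, rfl⟩⟩
    · exact Finset.mem_biUnion.mpr ⟨i, Finset.mem_range.mpr hi,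
        Finset.mem_image.mpr ⟨y, ((Pf (L.getD i ∅)).adj_mem _ _ hadj).2, rfl⟩⟩

variable {L : List (Finset α)} {Pf : Finset α → FinDigraph ℕ}

lemma pair_inj {i x j y : ℕ} (h : Nat.pair i x = Nat.pair j y) : i = j ∧ x = y := by
  have := congrArg Nat.unpair h
  rw [Nat.unpair_pair, Nat.unpair_pair] at this
  exact ⟨congrArg Prod.fst this, congrArg Prod.snd this⟩

lemma unionD_mem {a : ℕ} : a ∈ (unionD L Pf).verts ↔
    ∃ i < L.length, ∃ x ∈ (Pf (L.getD i ∅)).verts, a = Nat.pair i x := by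
  simp only [unionD, Finset.mem_biUnion, Finset.mem_range, Finset.mem_image]
  constructor
  · rintro ⟨i, hi, x, hx, rfl⟩
    exact ⟨i, hi, x, hx, rfl⟩
  · rintro ⟨i, hi, x, hx, rfl⟩
    exact ⟨i, hi, x, hx, rfl⟩

lemma unionD_mem_pair {i x : ℕ} : Nat.pair i x ∈ (unionD L Pf).verts ↔
    i < L.length ∧ x ∈ (Pf (L.getD i ∅)).verts := by
  rw [unionD_mem]
  constructor
  · rintro ⟨j, hj, y, hy, he⟩
    obtain ⟨rfl, rfl⟩ := pair_inj he
    exact ⟨hj, hy⟩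
  · rintro ⟨hi, hx⟩
    exact ⟨i, hi, x, hx, rfl⟩

lemma unionD_adj_intro {i x y : ℕ} (hi : i < L.length)
    (h : (Pf (L.getD i ∅)).Adj x y) :
    (unionD L Pf).Adj (Nat.pair i x) (Nat.pair i y) :=
  ⟨i, hi, x, y, h, rfl, rfl⟩

lemma unionD_adj_proj {i x b : ℕ} (h : (unionD L Pf).Adj (Nat.pair i x) b) :
    ∃ y, b = Nat.pair i y ∧ (Pf (L.getD i ∅)).Adj x y := by
  obtain ⟨j, hj, x', y', hadj, he, rfl⟩ := h
  obtain ⟨rfl, rfl⟩ := pair_inj he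
  exact ⟨y', rfl, hadj⟩

lemma unionD_trans_proj {i x : ℕ} {b : ℕ}
    (h : Relation.TransGen (unionD L Pf).Adj (Nat.pair i x) b) :
    ∃ y, b = Nat.pair i y ∧ Relation.TransGen (Pf (L.getD i ∅)).Adj x y := by
  induction h with
  | single h =>
    obtain ⟨y, rfl, hadj⟩ := unionD_adj_proj h
    exact ⟨y, rfl, Relation.TransGen.single hadj⟩
  | @tail b c hab hbc ih =>
    obtain ⟨y, rfl, hxy⟩ := ih
    obtain ⟨z, rfl, hadj⟩ := unionD_adj_proj hbc
    exact ⟨z, rfl, hxy.tail hadj⟩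

lemma unionD_isDag (h : ∀ i < L.length, (Pf (L.getD i ∅)).IsDag) :
    (unionD L Pf).IsDag := by
  intro v hv
  have hfirst : ∀ a b : ℕ, Relation.TransGen (unionD L Pf).Adj a b →
      ∃ i < L.length, ∃ x, a = Nat.pair i x := by
    intro a b hab
    induction hab with
    | single h' =>
      obtain ⟨i, hi, x, y, -, rfl, -⟩ := h'
      exact ⟨i, hi, x, rfl⟩
    | tail h' _ ih => exact ih
  obtain ⟨i, hi, x, rfl⟩ := hfirst v v hv
  obtain ⟨y, he, htg⟩ := unionD_trans_proj hv
  obtain ⟨-, rfl⟩ := pair_inj he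
  exact h i hi x htg

lemma unionD_chain_proj {i : ℕ} : ∀ (t : List ℕ) (x : ℕ),
    List.Chain (unionD L Pf).Adj (Nat.pair i x) t →
    ∃ t', t = t'.map (Nat.pair i) ∧ List.Chain (Pf (L.getD i ∅)).Adj x t' := by
  intro t
  induction t with
  | nil => exact fun x _ => ⟨[], rfl, List.Chain.nil⟩
  | cons b r ih =>
    intro x h
    simp only [List.Chain, List.chain_cons] at h
    obtain ⟨y, rfl, hadj⟩ := unionD_adj_proj h.1
    obtain ⟨t', rfl, hch⟩ := ih y h.2
    exact ⟨y :: t', rfl, List.chain_cons.mpr ⟨hadj, hch⟩⟩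

lemma unionD_isRoot_iff {i x : ℕ} (hi : i < L.length)
    (hx : x ∈ (Pf (L.getD i ∅)).verts) :
    (unionD L Pf).IsRoot (Nat.pair i x) ↔ (Pf (L.getD i ∅)).IsRoot x := by
  constructor
  · intro hroot
    refine ⟨hx, fun u hu => ?_⟩
    exact hroot.2 (Nat.pair i u) (unionD_adj_intro hi hu)
  · intro hroot
    refine ⟨unionD_mem_pair.mpr ⟨hi, hx⟩, fun a ha => ?_⟩
    obtain ⟨j, hj, x', y', hadj, rfl, he⟩ := ha
    obtain ⟨rfl, rfl⟩ := pair_inj he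
    exact hroot.2 x' hadj

lemma unionD_desc {i x y : ℕ} (h : (Pf (L.getD i ∅)).Desc x y) (hi : i < L.length) :
    (unionD L Pf).Desc (Nat.pair i x) (Nat.pair i y) :=
  Relation.ReflTransGen.lift (Nat.pair i) (fun _ _ hab => unionD_adj_intro hi hab) _ _ h

lemma unionD_rootPath {i x : ℕ} {l : List ℕ}
    (hl : (unionD L Pf).IsRootPath l (Nat.pair i x)) (hi : i < L.length) :
    ∃ t', (Pf (L.getD i ∅)).IsRootPath t' x ∧ l = t'.map (Nat.pair i) := by
  obtain ⟨hne, hchain, hmem, ⟨r, hrhead, hroot⟩, hlast⟩ := hl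
  obtain ⟨r', t, rfl⟩ := List.exists_cons_of_ne_nil hne
  have hr' : r' = r := by simpa using hrhead
  subst hr'
  obtain ⟨j, hj, z, hz, rfl⟩ := unionD_mem.mp hroot.1
  obtain ⟨t'', rfl, hch⟩ := unionD_chain_proj t z hchain
  -- last = pair j (getLast (z :: t'')) must equal pair i x
  have hlast' : (Nat.pair j z :: t''.map (Nat.pair j)).getLast? =
      some (Nat.pair j ((z :: t'').getLast (List.cons_ne_nil _ _))) := by
    have : Nat.pair j z :: t''.map (Nat.pair j) = (z :: t'').map (Nat.pair j) := by simp
    rw [this, List.getLast?_map, List.getLast?_eq_getLast (by simp)]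
    rfl
  rw [hlast'] at hlast
  obtain ⟨rfl, hlx⟩ := pair_inj (Option.some.inj hlast)
  refine ⟨z :: t'', ⟨by simp, hch, ?_, ⟨z, rfl, (unionD_isRoot_iff hj hz).mp hroot⟩, ?_⟩, by simp⟩
  · intro w hw
    have : Nat.pair j w ∈ Nat.pair j z :: t''.map (Nat.pair j) := by
      rcases List.mem_cons.mp hw with rfl | hw
      · simp
      · exact List.mem_cons_of_mem _ (List.mem_map.mpr ⟨w, hw, rfl⟩)
    exact (unionD_mem_pair.mp (hmem _ this)).2
  · rw [List.getLast?_eq_getLast (by simp), hlx]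

lemma fragment_out_closed {D : FinDigraph α} {R : Finset α} (hR : R ∈ D.fragments)
    {u w : α} (hu : u ∈ R) (h : D.Adj u w) : w ∈ R := by
  obtain ⟨-, ⟨s, hs, rfl⟩, -⟩ := mem_fragments.mp hR
  exact reachSet_out_closed hu h

lemma unionD_depth_le {n : ℕ} (hdag : ∀ i < L.length, (Pf (L.getD i ∅)).IsDag)
    (h : ∀ i < L.length, (Pf (L.getD i ∅)).depth ≤ n) : (unionD L Pf).depth ≤ n := by
  apply depth_le
  intro l hchain hmem
  cases l with
  | nil => simp
  | cons a t =>
    obtain ⟨i, hi, x, hx, rfl⟩ := unionD_mem.mp (hmem _ (List.mem_cons_self))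
    obtain ⟨t', rfl, hch⟩ := unionD_chain_proj t x hchain
    have hchx : (x :: t').Chain' (Pf (L.getD i ∅)).Adj := hch
    have hmx : ∀ z ∈ x :: t', z ∈ (Pf (L.getD i ∅)).verts := by
      intro z hz
      rcases List.mem_cons.mp hz with rfl | hz
      · exact hx
      · exact (unionD_mem_pair.mp (hmem _
          (List.mem_cons_of_mem _ (List.mem_map.mpr ⟨z, hz, rfl⟩)))).2
    have hlen := (le_depth (hdag i hi) hchx hmx).trans (h i hi)
    simpa using hlen

lemma unionD_depth_ge {i : ℕ} (hi : i < L.length)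
    (hdag : ∀ j < L.length, (Pf (L.getD j ∅)).IsDag) :
    (Pf (L.getD i ∅)).depth ≤ (unionD L Pf).depth := by
  apply depth_le
  intro l hchain hmem
  have hmap : (l.map (Nat.pair i)).Chain' (unionD L Pf).Adj := by
    simp only [List.Chain', List.isChain_map]
    exact hchain.imp (fun _ _ h => unionD_adj_intro hi h)
  have hmm : ∀ z ∈ l.map (Nat.pair i), z ∈ (unionD L Pf).verts := by
    intro z hz
    obtain ⟨w, hw, rfl⟩ := List.mem_map.mp hz
    exact unionD_mem_pair.mpr ⟨hi, hmem w hw⟩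
  have := le_depth (unionD_isDag hdag) hmap hmm
  simpa using this

lemma unionD_valid {D : FinDigraph α} {orgf : Finset α → ℕ → α}
    (hfrag : ∀ i < L.length, L.getD i ∅ ∈ D.fragments)
    (hvalid : ∀ i < L.length,
      IsValidDecomp (D.induce (L.getD i ∅)) (Pf (L.getD i ∅)) (orgf (L.getD i ∅)))
    (hcoverall : ∀ v ∈ D.verts, ∃ i < L.length, v ∈ L.getD i ∅) :
    IsValidDecomp D (unionD L Pf) (fun n => orgf (L.getD n.unpair.1 ∅) n.unpair.2) := by
  have horgeval : ∀ i x : ℕ,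
      (fun n : ℕ => orgf (L.getD n.unpair.1 ∅) n.unpair.2) (Nat.pair i x) =
        orgf (L.getD i ∅) x := by
    intro i x
    simp [Nat.unpair_pair]
  refine ⟨unionD_isDag (fun i hi => (hvalid i hi).1), ?_, ?_, ?_⟩
  · intro v' hv'
    obtain ⟨i, hi, x, hx, rfl⟩ := unionD_mem.mp hv'
    rw [horgeval]
    have := (hvalid i hi).2.1 x hx
    rw [induce_verts, Finset.mem_inter] at this
    exact this.1
  · intro v hv
    obtain ⟨i, hi, hvRi⟩ := hcoverall v hv
    have hvI : v ∈ (D.induce (L.getD i ∅)).verts := by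
      rw [induce_verts, Finset.mem_inter]
      exact ⟨hv, hvRi⟩
    obtain ⟨x, hx, horg⟩ := (hvalid i hi).2.2.1 v hvI
    exact ⟨Nat.pair i x, unionD_mem_pair.mpr ⟨hi, hx⟩, by rw [horgeval]; exact horg⟩
  · intro v' hv' u hadj
    obtain ⟨i, hi, x, hx, rfl⟩ := unionD_mem.mp hv'
    rw [horgeval] at hadj
    have hwI : orgf (L.getD i ∅) x ∈ (D.induce (L.getD i ∅)).verts := (hvalid i hi).2.1 x hx
    rw [induce_verts, Finset.mem_inter] at hwI
    have huRi : u ∈ L.getD i ∅ := fragment_out_closed (hfrag i hi) hwI.2 hadj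
    have hadjI : (D.induce (L.getD i ∅)).Adj (orgf (L.getD i ∅) x) u := ⟨hadj, hwI.2, huRi⟩
    rcases (hvalid i hi).2.2.2 x hx u hadjI with ⟨u', hu', horg, hdesc⟩ | hcov
    · exact Or.inl ⟨Nat.pair i u', unionD_mem_pair.mpr ⟨hi, hu'⟩,
        by rw [horgeval]; exact horg, unionD_desc hdesc hi⟩
    · refine Or.inr ?_
      intro l hl
      obtain ⟨t', ht', rfl⟩ := unionD_rootPath hl hi
      obtain ⟨u', hu't, horg⟩ := hcov t' ht'
      exact ⟨Nat.pair i u', List.mem_map.mpr ⟨u', hu't, rfl⟩, by rw [horgeval]; exact horg⟩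

lemma upper_bound : ∀ N : ℕ, ∀ D : FinDigraph α, D.verts.Nonempty → D.verts.card ≤ N →
    ∃ (P : FinDigraph ℕ) (org : ℕ → α), IsValidDecomp D P org ∧ depth P = ddp D := by
  intro N
  induction N with
  | zero =>
    intro D hne hcard
    have := Finset.card_pos.mpr hne
    omega
  | succ N ih =>
    intro D hne hcard
    obtain ⟨a₀, ha₀⟩ := hne
    by_cases hone : D.verts.card ≤ 1
    · -- base case : single vertex
      have hcard1 : D.verts.card = 1 := by
        have := Finset.card_pos.mpr ⟨a₀, ha₀⟩
        omega
      obtain ⟨b, hb⟩ := Finset.card_eq_one.mp hcard1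
      have hbD : b ∈ D.verts := by rw [hb]; exact Finset.mem_singleton_self b
      refine ⟨⟨{0}, fun _ _ => False, fun u v h => h.elim⟩, fun _ => b, ⟨?_, ?_, ?_, ?_⟩, ?_⟩
      · intro v hv
        rcases (Relation.transGen_iff _ _ _).mp hv with h | ⟨c, -, h⟩ <;> exact h
      · intro v' _
        exact hbD
      · intro v hv
        refine ⟨0, Finset.mem_singleton_self 0, ?_⟩
        rw [hb, Finset.mem_singleton] at hv
        exact hv.symm
      · intro v' hv' u hadj
        rw [Finset.mem_singleton] at hv'
        subst hv'
        have hu : u = b := by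
          have := (D.adj_mem _ _ hadj).2
          rw [hb, Finset.mem_singleton] at this
          exact this
        exact Or.inl ⟨0, Finset.mem_singleton_self 0, hu.symm, .refl⟩
      · rw [ddp_card_le_one ⟨a₀, ha₀⟩ hone]
        apply le_antisymm
        · apply depth_le
          intro l hchain hmem
          match l with
          | [] => simp
          | [x] => simp
          | x :: y :: t => exact absurd (List.isChain_cons_cons.mp hchain).1 (fun h => h)
        · have hd : (1:ℕ) ≤ _ := le_depth (P := ⟨{0}, fun _ _ => False, fun u v h => h.elim⟩)
            (by intro v hv
                rcases (Relation.transGen_iff _ _ _).mp hv with h | ⟨c, -, h⟩ <;> exact h)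
            (List.isChain_singleton 0) (by simp)
          exact hd
    · have h2 : 2 ≤ D.verts.card := by omega
      by_cases hfrag : D.fragments.card = 1
      · -- cone case
        obtain ⟨v, hv, hmin⟩ := Finset.exists_min_image D.verts
          (fun v => ddp (D.deleteVert v)) ⟨a₀, ha₀⟩
        set D' := D.deleteVert v with hD'def
        have hD'card : D'.verts.card = D.verts.card - 1 := deleteVert_card hv
        have hD'ne : D'.verts.Nonempty := by rw [← Finset.card_pos]; omega
        obtain ⟨P', org', hval', hdep'⟩ := ih D' hD'ne (by omega)
        have hP'ne : P'.verts.Nonempty := by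
          obtain ⟨s, hs⟩ := hD'ne
          obtain ⟨x, hx, -⟩ := hval'.2.2.1 s hs
          exact ⟨x, hx⟩
        refine ⟨cone P', fun n => if n = 0 then v else org' (n - 1),
          cone_valid hv hval', ?_⟩
        rw [cone_depth hval'.1 hP'ne, hdep']
        rw [ddp_single_fragment h2 hfrag]
        have hinf : (D.verts.inf' (Finset.card_pos.mp (by omega))
            (fun v => ddp (D.deleteVert v))) = ddp D' := by
          apply le_antisymm
          · exact Finset.inf'_le _ hv
          · exact Finset.le_inf' _ _ (fun b hb => hmin b hb)
        omega
      · -- union case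
        set L := D.fragments.toList with hLdef
        have hLmem : ∀ i, i < L.length → L.getD i ∅ ∈ D.fragments := by
          intro i hi
          rw [List.getD_eq_getElem L ∅ hi]
          exact Finset.mem_toList.mp (List.getElem_mem hi)
        have hchoice : ∀ R : Finset α, ∃ (PR : FinDigraph ℕ) (orgR : ℕ → α),
            R ∈ D.fragments →
              IsValidDecomp (D.induce R) PR orgR ∧ depth PR = ddp (D.induce R) := by
          intro R
          by_cases hR : R ∈ D.fragments
          · have hss := fragment_ssubset hR hfrag
            have hne' : (D.induce R).verts.Nonempty := by
              rw [induce_verts_of_subset hss.subset]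
              exact fragment_nonempty hR
            have hcard' : (D.induce R).verts.card ≤ N := by
              rw [induce_verts_of_subset hss.subset]
              have := Finset.card_lt_card hss
              omega
            obtain ⟨PR, orgR, h⟩ := ih (D.induce R) hne' hcard'
            exact ⟨PR, orgR, fun _ => h⟩
          · exact ⟨⟨{0}, fun _ _ => False, fun u v h => h.elim⟩, fun _ => a₀,
              fun h => absurd h hR⟩
        choose Pf orgf hPf using hchoice
        have hvalids : ∀ i < L.length,
            IsValidDecomp (D.induce (L.getD i ∅)) (Pf (L.getD i ∅)) (orgf (L.getD i ∅)) :=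
          fun i hi => (hPf _ (hLmem i hi)).1
        have hdeps : ∀ i < L.length,
            depth (Pf (L.getD i ∅)) = ddp (D.induce (L.getD i ∅)) :=
          fun i hi => (hPf _ (hLmem i hi)).2
        have hdags : ∀ i < L.length, (Pf (L.getD i ∅)).IsDag :=
          fun i hi => (hvalids i hi).1
        have hcoverall : ∀ u ∈ D.verts, ∃ i < L.length, u ∈ L.getD i ∅ := by
          intro u hu
          obtain ⟨R, hR, hsub⟩ := exists_fragment_superset hu
          have hRL : R ∈ L := Finset.mem_toList.mpr hR
          obtain ⟨i, hi, hgd⟩ := List.getElem_of_mem hRL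
          refine ⟨i, hi, ?_⟩
          rw [List.getD_eq_getElem L ∅ hi, hgd]
          exact hsub (mem_reachSet_self hu)
        refine ⟨unionD L Pf, _, unionD_valid hLmem hvalids hcoverall, ?_⟩
        rw [ddp_multi_fragment ⟨a₀, ha₀⟩ hfrag]
        apply le_antisymm
        · apply unionD_depth_le hdags
          intro i hi
          rw [hdeps i hi]
          exact Finset.le_sup (f := fun R => ddp (D.induce R)) (hLmem i hi)
        · apply Finset.sup_le
          intro R hR
          have hRL : R ∈ L := Finset.mem_toList.mpr hR
          obtain ⟨i, hi, hgd⟩ := List.getElem_of_mem hRL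
          have hgd' : L.getD i ∅ = R := by rw [List.getD_eq_getElem L ∅ hi, hgd]
          rw [← hgd', ← hdeps i hi]
          exact unionD_depth_ge hi hdags


end FinDigraph

open FinDigraph in
/-- `ddp D` equals the minimum of `depth P` over all valid DAG-depth
decompositions `(P, org)` of `D`: some valid decomposition attains depth `ddp D`,
and every valid decomposition has depth at least `ddp D`. -/
theorem ddp_eq_min_depth_valid_decomp {α : Type} (D : FinDigraph α)
    (hne : D.verts.Nonempty) :
    (∃ (P : FinDigraph ℕ) (org : ℕ → α), IsValidDecomp D P org ∧ depth P = ddp D) ∧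
    (∀ (β : Type) (P : FinDigraph β) (org : β → α),
      IsValidDecomp D P org → ddp D ≤ depth P) := by
  constructor
  · exact upper_bound D.verts.card D hne (le_refl _)
  · intro β P org hval
    exact lower_bound hne hval
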